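/- Let β > 0, τ > 0, K ≥ 0 and let N ≥ 1 be an integer. Let M_Ω ∈ ℝ^{n_Ω×n_Ω} and M_Γ ∈ ℝ^{n_Γ×n_Γ} be diagonal matrices with positive diagonal entries, and let L_Ω ∈ ℝ^{n_Ω×n_Ω} and L_Γ ∈ ℝ^{n_Γ×n_Γ} be symmetric positive semidefinite. Let U⁰, …, U^N, μ¹, …, μ^N ∈ ℝ^{n_Ω} and θ¹, …, θ^N ∈ ℝ^{n_Γ} satisfy, for each n ∈ {1, …, N}, the combined equation M_Ω(Uⁿ − Uⁿ⁻¹) + β⁻¹·ext(M_Γ(Uⁿ|_Γ − Uⁿ⁻¹|_Γ)) + τ·L_Ω·μⁿ + τ·β⁻¹·ext(L_Γ·θⁿ) = 0, together with the uniform bounds (Uⁿ)ᵀL_Ω Uⁿ ≤ K and (Uⁿ|_Γ)ᵀL_Γ(Uⁿ|_Γ) ≤ K for all n ∈ {0, …, N}, and τ·Σ_{n=1}^{N}(μⁿ)ᵀL_Ω μⁿ ≤ K and τ·Σ_{n=1}^{N}(θⁿ)ᵀL_Γ θⁿ ≤ K. Then there exists a constant C > 0, depending only on β, K and Nτ (and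 in particular independent of l, of the dimensions n_Γ, n_I and of τ), such that for every l ∈ {1, …, N}: τ·Σ_{k=0}^{N−l}(U^{k+l} − U^k)ᵀM_Ω(U^{k+l} − U^k) + τ·Σ_{k=0}^{N−l}(U^{k+l}|_Γ − U^k|_Γ)ᵀM_Γ(U^{k+l}|_Γ − U^k|_Γ) ≤ C·τ·l. -/

import Mathlib

open Matrix

/-- Restriction of a bulk vector (indexed by `Fin nΓ ⊕ Fin nI`, boundary
coordinates first) to its boundary coordinates. -/
def restrΓ {nΓ nI : ℕ} (v : Fin nΓ ⊕ Fin nI → ℝ) : Fin nΓ → ℝ := fun i => v (Sum.inl i)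

/-- Extension of a boundary vector by zero in the interior coordinates. -/
def extΩ {nΓ nI : ℕ} (x : Fin nΓ → ℝ) : Fin nΓ ⊕ Fin nI → ℝ := Sum.elim x 0

section aux

variable {m : Type*} [Fintype m]

private lemma quad_nonneg' {L : Matrix m m ℝ} (hL : L.PosSemidef) (x : m → ℝ) :
    0 ≤ x ⬝ᵥ L *ᵥ x := by simpa using hL.dotProduct_mulVec_nonneg x

private lemma bilin_symm' {L : Matrix m m ℝ} (hL : L.PosSemidef) (x y : m → ℝ) :
    x ⬝ᵥ L *ᵥ y = y ⬝ᵥ L *ᵥ x := by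
  have hLt : Lᵀ = L := by
    have h := hL.1
    rwa [Matrix.IsHermitian, Matrix.conjTranspose_eq_transpose_of_trivial] at h
  rw [Matrix.dotProduct_mulVec, ← Matrix.mulVec_transpose, hLt, dotProduct_comm]

private lemma sub_expand' (L : Matrix m m ℝ) (x y : m → ℝ) :
    (x - y) ⬝ᵥ L *ᵥ (x - y)
      = x ⬝ᵥ L *ᵥ x - x ⬝ᵥ L *ᵥ y - y ⬝ᵥ L *ᵥ x + y ⬝ᵥ L *ᵥ y := by
  simp [Matrix.mulVec_sub, dotProduct_sub, sub_dotProduct]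
  ring

private lemma neg_pair_le' {L : Matrix m m ℝ} (hL : L.PosSemidef) (x y : m → ℝ) :
    -(x ⬝ᵥ L *ᵥ y) ≤ (x ⬝ᵥ L *ᵥ x + y ⬝ᵥ L *ᵥ y) / 2 := by
  have h := quad_nonneg' hL (x + y)
  have hexp : (x + y) ⬝ᵥ L *ᵥ (x + y)
      = x ⬝ᵥ L *ᵥ x + x ⬝ᵥ L *ᵥ y + y ⬝ᵥ L *ᵥ x + y ⬝ᵥ L *ᵥ y := by
    simp [Matrix.mulVec_add, dotProduct_add, add_dotProduct]
    ring
  have hs := bilin_symm' hL x y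
  linarith

private lemma quad_sub_le' {L : Matrix m m ℝ} (hL : L.PosSemidef) (x y : m → ℝ) :
    (x - y) ⬝ᵥ L *ᵥ (x - y) ≤ 2 * (x ⬝ᵥ L *ᵥ x + y ⬝ᵥ L *ᵥ y) := by
  have h := quad_nonneg' hL (x + y)
  have hexp : (x + y) ⬝ᵥ L *ᵥ (x + y)
      = x ⬝ᵥ L *ᵥ x + x ⬝ᵥ L *ᵥ y + y ⬝ᵥ L *ᵥ x + y ⬝ᵥ L *ᵥ y := by
    simp [Matrix.mulVec_add, dotProduct_add, add_dotProduct]; ring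
  have hs := bilin_symm' hL x y
  rw [sub_expand']
  linarith

private lemma diag_quad_nonneg' [DecidableEq m] {d : m → ℝ} (hd : ∀ i, 0 < d i) (x : m → ℝ) :
    0 ≤ x ⬝ᵥ (Matrix.diagonal d) *ᵥ x := by
  simp only [dotProduct, Matrix.mulVec_diagonal]
  apply Finset.sum_nonneg
  intro i _
  nlinarith [(hd i).le, sq_nonneg (x i)]

end aux

private lemma dot_ext' {nΓ nI : ℕ} (v : Fin nΓ ⊕ Fin nI → ℝ) (x : Fin nΓ → ℝ) :
    v ⬝ᵥ extΩ x = restrΓ v ⬝ᵥ x := by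
  simp [extΩ, restrΓ, dotProduct, Fintype.sum_sum_type]

private lemma icc_range' (g : ℕ → ℝ) (k l : ℕ) :
    ∑ n ∈ Finset.Icc (k+1) (k+l), g n = ∑ i ∈ Finset.range l, g (k+1+i) := by
  rw [← Finset.Ico_add_one_right_eq_Icc, Finset.sum_Ico_eq_sum_range]
  have h1 : k + l + 1 - (k + 1) = l := by omega
  rw [h1]

private lemma tel' (f : ℕ → ℝ) (k l : ℕ) :
    ∑ n ∈ Finset.Icc (k+1) (k+l), (f n - f (n-1)) = f (k+l) - f k := by
  rw [icc_range']
  have h2 : ∀ i, f (k+1+i) - f (k+1+i-1) = f (k+(i+1)) - f (k+i) := by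
    intro i; congr 2 <;> omega
  rw [Finset.sum_congr rfl (fun i _ => h2 i), Finset.sum_range_sub (fun j => f (k+j)) l]
  simp

private lemma range_shift_le' (g : ℕ → ℝ) (hg : ∀ n, 0 ≤ g n) (N l i : ℕ)
    (hi : i < l) (hl : l ≤ N) :
    ∑ k ∈ Finset.range (N - l + 1), g (k+1+i) ≤ ∑ n ∈ Finset.Icc 1 N, g n := by
  have h : ∑ k ∈ Finset.range (N - l + 1), g (k+1+i)
      = ∑ n ∈ Finset.Ico (1+i) (1+i+(N-l+1)), g n := by
    rw [Finset.sum_Ico_eq_sum_range]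
    have h0 : 1 + i + (N - l + 1) - (1 + i) = N - l + 1 := by omega
    rw [h0]
    exact Finset.sum_congr rfl (fun j _ => by congr 1; omega)
  rw [h]
  apply Finset.sum_le_sum_of_subset_of_nonneg
  · intro x hx
    simp only [Finset.mem_Ico, Finset.mem_Icc] at *
    omega
  · intro j _ _; exact hg j

set_option maxHeartbeats 1000000 in
/-- Lemma 5.6 of the paper, matrix formulation: a
Nikolskii-type time-translation estimate for the discrete solutions. The
constant `C` depends only on `β`, the a priori bound `K` and the final time
`T = N·τ`, and in particular is independent of the translation index `l`, of
the dimensions `nΓ`, `nI` and of the time step `τ`. -/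
theorem discrete_nikolskii (β K T : ℝ) (hβ : 0 < β) (hK : 0 ≤ K) (hT : 0 < T) :
    ∃ C : ℝ, 0 < C ∧
      ∀ (nΓ nI N : ℕ) (τ : ℝ), 0 < τ → 1 ≤ N → (N : ℝ) * τ = T →
      ∀ (dΩ : Fin nΓ ⊕ Fin nI → ℝ), (∀ i, 0 < dΩ i) →
      ∀ (dΓ : Fin nΓ → ℝ), (∀ i, 0 < dΓ i) →
      ∀ (LΩ : Matrix (Fin nΓ ⊕ Fin nI) (Fin nΓ ⊕ Fin nI) ℝ), LΩ.PosSemidef →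
      ∀ (LΓ : Matrix (Fin nΓ) (Fin nΓ) ℝ), LΓ.PosSemidef →
      ∀ (U μ : ℕ → (Fin nΓ ⊕ Fin nI → ℝ)) (θ : ℕ → (Fin nΓ → ℝ)),
      -- the combined discrete evolution equation, for n = 1, …, N
      (∀ n, 1 ≤ n → n ≤ N →
        (Matrix.diagonal dΩ).mulVec (U n - U (n - 1))
          + β⁻¹ • extΩ ((Matrix.diagonal dΓ).mulVec (restrΓ (U n) - restrΓ (U (n - 1))))
          + τ • LΩ.mulVec (μ n) + (τ * β⁻¹) • extΩ (LΓ.mulVec (θ n)) = 0) →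
      -- uniform a priori bounds
      (∀ n, n ≤ N → U n ⬝ᵥ LΩ.mulVec (U n) ≤ K) →
      (∀ n, n ≤ N → restrΓ (U n) ⬝ᵥ LΓ.mulVec (restrΓ (U n)) ≤ K) →
      τ * ∑ n ∈ Finset.Icc 1 N, μ n ⬝ᵥ LΩ.mulVec (μ n) ≤ K →
      τ * ∑ n ∈ Finset.Icc 1 N, θ n ⬝ᵥ LΓ.mulVec (θ n) ≤ K →
      -- the Nikolskii-type estimate
      ∀ l, 1 ≤ l → l ≤ N →
        τ * ∑ k ∈ Finset.range (N - l + 1),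
            (U (k + l) - U k) ⬝ᵥ (Matrix.diagonal dΩ).mulVec (U (k + l) - U k)
          + τ * ∑ k ∈ Finset.range (N - l + 1),
              (restrΓ (U (k + l)) - restrΓ (U k)) ⬝ᵥ
                (Matrix.diagonal dΓ).mulVec (restrΓ (U (k + l)) - restrΓ (U k))
          ≤ C * τ * (l : ℝ) := by
  have hM1 : (1:ℝ) ≤ max 1 β := le_max_left 1 β
  have hMβ : β ≤ max 1 β := le_max_right 1 β
  have hM0 : (0:ℝ) ≤ max 1 β := by linarith
  have hβi : (0:ℝ) ≤ β⁻¹ := by positivity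
  refine ⟨max 1 β * ((1 + β⁻¹) * (2*K*T + K/2)) + 1, ?_, ?_⟩
  · have h2 : (0:ℝ) ≤ (1 + β⁻¹) * (2*K*T + K/2) := by positivity
    nlinarith [mul_nonneg hM0 h2]
  intro nΓ nI N τ hτ hN hNτ dΩ hdΩ dΓ hdΓ LΩ hLΩ LΓ hLΓ U μ θ heq hU hUΓ hμ hθ l hl1 hlN
  set g : ℕ → ℝ := fun n =>
    2*K*(1+β⁻¹) + (μ n ⬝ᵥ LΩ *ᵥ μ n)/2 + β⁻¹ * ((θ n ⬝ᵥ LΓ *ᵥ θ n)/2) with hgdef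
  have hg0 : ∀ n, 0 ≤ g n := by
    intro n
    have h1 := quad_nonneg' hLΩ (μ n)
    have h2 := quad_nonneg' hLΓ (θ n)
    have h3 : (0:ℝ) ≤ 2*K*(1+β⁻¹) := by positivity
    have h4 : (0:ℝ) ≤ β⁻¹ * ((θ n ⬝ᵥ LΓ *ᵥ θ n)/2) := mul_nonneg hβi (by linarith)
    simp only [hgdef]
    linarith
  -- the per-translate estimate
  have key : ∀ k, k + l ≤ N →
      (U (k+l) - U k) ⬝ᵥ (Matrix.diagonal dΩ) *ᵥ (U (k+l) - U k)
        + (restrΓ (U (k+l)) - restrΓ (U k)) ⬝ᵥ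
            (Matrix.diagonal dΓ) *ᵥ (restrΓ (U (k+l)) - restrΓ (U k))
      ≤ max 1 β * (τ * ∑ n ∈ Finset.Icc (k+1) (k+l), g n) := by
    intro k hkl
    set W := U (k+l) - U k with hWdef
    set w := restrΓ (U (k+l)) - restrΓ (U k) with hwdef
    have hsc : ∀ n ∈ Finset.Icc (k+1) (k+l),
        ((fun j => W ⬝ᵥ (Matrix.diagonal dΩ) *ᵥ U j) n
            - (fun j => W ⬝ᵥ (Matrix.diagonal dΩ) *ᵥ U j) (n-1))
          + β⁻¹ * ((fun j => w ⬝ᵥ (Matrix.diagonal dΓ) *ᵥ restrΓ (U j)) n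
            - (fun j => w ⬝ᵥ (Matrix.diagonal dΓ) *ᵥ restrΓ (U j)) (n-1))
        = -(τ * (W ⬝ᵥ LΩ *ᵥ μ n)) - τ * β⁻¹ * (w ⬝ᵥ LΓ *ᵥ θ n) := by
      intro n hn
      rw [Finset.mem_Icc] at hn
      have h := heq n (by omega) (by omega)
      have h2 := congrArg (fun v => W ⬝ᵥ v) h
      simp only [dotProduct_add, dotProduct_smul, dotProduct_zero,
        dot_ext', smul_eq_mul] at h2
      have hrW : restrΓ W = w := rfl
      rw [hrW] at h2
      have e1 : W ⬝ᵥ (Matrix.diagonal dΩ) *ᵥ (U n - U (n-1))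
          = W ⬝ᵥ (Matrix.diagonal dΩ) *ᵥ U n - W ⬝ᵥ (Matrix.diagonal dΩ) *ᵥ U (n-1) := by
        rw [Matrix.mulVec_sub, dotProduct_sub]
      have e2 : w ⬝ᵥ (Matrix.diagonal dΓ) *ᵥ (restrΓ (U n) - restrΓ (U (n-1)))
          = w ⬝ᵥ (Matrix.diagonal dΓ) *ᵥ restrΓ (U n)
            - w ⬝ᵥ (Matrix.diagonal dΓ) *ᵥ restrΓ (U (n-1)) := by
        rw [Matrix.mulVec_sub, dotProduct_sub]
      rw [e1, e2] at h2
      simp only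
      linarith
    have hsum := Finset.sum_congr rfl hsc
    have hL1 : ∑ n ∈ Finset.Icc (k+1) (k+l),
        ((fun j => W ⬝ᵥ (Matrix.diagonal dΩ) *ᵥ U j) n
          - (fun j => W ⬝ᵥ (Matrix.diagonal dΩ) *ᵥ U j) (n-1))
        = W ⬝ᵥ (Matrix.diagonal dΩ) *ᵥ W := by
      rw [tel' (fun j => W ⬝ᵥ (Matrix.diagonal dΩ) *ᵥ U j) k l]
      rw [hWdef, Matrix.mulVec_sub, dotProduct_sub]
    have hL2 : ∑ n ∈ Finset.Icc (k+1) (k+l),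
        ((fun j => w ⬝ᵥ (Matrix.diagonal dΓ) *ᵥ restrΓ (U j)) n
          - (fun j => w ⬝ᵥ (Matrix.diagonal dΓ) *ᵥ restrΓ (U j)) (n-1))
        = w ⬝ᵥ (Matrix.diagonal dΓ) *ᵥ w := by
      rw [tel' (fun j => w ⬝ᵥ (Matrix.diagonal dΓ) *ᵥ restrΓ (U j)) k l]
      rw [hwdef, Matrix.mulVec_sub, dotProduct_sub]
    have hWK : W ⬝ᵥ LΩ *ᵥ W ≤ 4*K := by
      have h0 := quad_sub_le' hLΩ (U (k+l)) (U k)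
      have h1 := hU (k+l) hkl
      have h2 := hU k (by omega)
      rw [hWdef]; linarith
    have hwK : w ⬝ᵥ LΓ *ᵥ w ≤ 4*K := by
      have h0 := quad_sub_le' hLΓ (restrΓ (U (k+l))) (restrΓ (U k))
      have h1 := hUΓ (k+l) hkl
      have h2 := hUΓ k (by omega)
      rw [hwdef]; linarith
    have hbound : ∀ n ∈ Finset.Icc (k+1) (k+l),
        -(τ * (W ⬝ᵥ LΩ *ᵥ μ n)) - τ * β⁻¹ * (w ⬝ᵥ LΓ *ᵥ θ n) ≤ τ * g n := by
      intro n _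
      have hq1 := neg_pair_le' hLΩ W (μ n)
      have hq2 := neg_pair_le' hLΓ w (θ n)
      have hA : -(W ⬝ᵥ LΩ *ᵥ μ n) ≤ 2*K + (μ n ⬝ᵥ LΩ *ᵥ μ n)/2 := by linarith
      have hB : -(w ⬝ᵥ LΓ *ᵥ θ n) ≤ 2*K + (θ n ⬝ᵥ LΓ *ᵥ θ n)/2 := by linarith
      have hA' := mul_le_mul_of_nonneg_left hA hτ.le
      have hB' := mul_le_mul_of_nonneg_left hB (mul_nonneg hτ.le hβi)
      simp only [hgdef]
      nlinarith [hA', hB']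
    have hRHS : ∑ n ∈ Finset.Icc (k+1) (k+l),
        (-(τ * (W ⬝ᵥ LΩ *ᵥ μ n)) - τ * β⁻¹ * (w ⬝ᵥ LΓ *ᵥ θ n))
        ≤ τ * ∑ n ∈ Finset.Icc (k+1) (k+l), g n := by
      rw [Finset.mul_sum]
      exact Finset.sum_le_sum hbound
    have step1 : W ⬝ᵥ (Matrix.diagonal dΩ) *ᵥ W
        + β⁻¹ * (w ⬝ᵥ (Matrix.diagonal dΓ) *ᵥ w)
        ≤ τ * ∑ n ∈ Finset.Icc (k+1) (k+l), g n := by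
      have hls : ∑ n ∈ Finset.Icc (k+1) (k+l),
          (((fun j => W ⬝ᵥ (Matrix.diagonal dΩ) *ᵥ U j) n
              - (fun j => W ⬝ᵥ (Matrix.diagonal dΩ) *ᵥ U j) (n-1))
            + β⁻¹ * ((fun j => w ⬝ᵥ (Matrix.diagonal dΓ) *ᵥ restrΓ (U j)) n
              - (fun j => w ⬝ᵥ (Matrix.diagonal dΓ) *ᵥ restrΓ (U j)) (n-1)))
          = W ⬝ᵥ (Matrix.diagonal dΩ) *ᵥ W + β⁻¹ * (w ⬝ᵥ (Matrix.diagonal dΓ) *ᵥ w) := by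
        rw [Finset.sum_add_distrib, hL1, ← Finset.mul_sum, hL2]
      rw [← hls, hsum]
      exact hRHS
    have hq1 : 0 ≤ W ⬝ᵥ (Matrix.diagonal dΩ) *ᵥ W := diag_quad_nonneg' hdΩ W
    have hq2 : 0 ≤ w ⬝ᵥ (Matrix.diagonal dΓ) *ᵥ w := diag_quad_nonneg' hdΓ w
    have hBB : β * (β⁻¹ * (w ⬝ᵥ (Matrix.diagonal dΓ) *ᵥ w))
        = w ⬝ᵥ (Matrix.diagonal dΓ) *ᵥ w := by
      field_simp
    nlinarith [mul_le_mul_of_nonneg_left step1 hM0,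
      mul_nonneg (sub_nonneg.mpr hM1) hq1,
      mul_nonneg (sub_nonneg.mpr hMβ) (mul_nonneg hβi hq2), hBB]
  -- double-sum bound
  have hdouble : ∑ k ∈ Finset.range (N-l+1), ∑ n ∈ Finset.Icc (k+1) (k+l), g n
      ≤ (l:ℝ) * ∑ n ∈ Finset.Icc 1 N, g n := by
    rw [Finset.sum_congr rfl (fun k _ => icc_range' g k l), Finset.sum_comm]
    calc ∑ i ∈ Finset.range l, ∑ k ∈ Finset.range (N-l+1), g (k+1+i)
        ≤ ∑ _i ∈ Finset.range l, ∑ n ∈ Finset.Icc 1 N, g n :=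
          Finset.sum_le_sum (fun i hi =>
            range_shift_le' g hg0 N l i (Finset.mem_range.mp hi) hlN)
      _ = (l:ℝ) * ∑ n ∈ Finset.Icc 1 N, g n := by
          rw [Finset.sum_const, Finset.card_range, nsmul_eq_mul]
  -- bound on τ * ∑ g
  have hgsum : τ * ∑ n ∈ Finset.Icc 1 N, g n ≤ (1+β⁻¹) * (2*K*T + K/2) := by
    have hexp : ∑ n ∈ Finset.Icc 1 N, g n
        = (N:ℝ) * (2*K*(1+β⁻¹)) + (∑ n ∈ Finset.Icc 1 N, μ n ⬝ᵥ LΩ *ᵥ μ n)/2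
          + β⁻¹ * ((∑ n ∈ Finset.Icc 1 N, θ n ⬝ᵥ LΓ *ᵥ θ n)/2) := by
      simp only [hgdef]
      rw [Finset.sum_add_distrib, Finset.sum_add_distrib, Finset.sum_const, Nat.card_Icc,
        nsmul_eq_mul, ← Finset.sum_div, ← Finset.mul_sum, ← Finset.sum_div]
      have hcard : N + 1 - 1 = N := by omega
      rw [hcard]
    rw [hexp]
    have h1 : τ * ((N:ℝ) * (2*K*(1+β⁻¹))) = 2*K*(1+β⁻¹)*T := by
      rw [← hNτ]; ring
    nlinarith [hμ, mul_le_mul_of_nonneg_left hθ hβi, h1]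
  -- put everything together
  have hgs0 : 0 ≤ ∑ n ∈ Finset.Icc 1 N, g n := Finset.sum_nonneg (fun n _ => hg0 n)
  have hl0 : (0:ℝ) < (l:ℝ) := by exact_mod_cast hl1
  have hkey' : ∀ k ∈ Finset.range (N - l + 1),
      (U (k+l) - U k) ⬝ᵥ (Matrix.diagonal dΩ) *ᵥ (U (k+l) - U k)
        + (restrΓ (U (k+l)) - restrΓ (U k)) ⬝ᵥ
            (Matrix.diagonal dΓ) *ᵥ (restrΓ (U (k+l)) - restrΓ (U k))
      ≤ max 1 β * (τ * ∑ n ∈ Finset.Icc (k+1) (k+l), g n) := by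
    intro k hk
    rw [Finset.mem_range] at hk
    exact key k (by omega)
  calc τ * ∑ k ∈ Finset.range (N - l + 1),
          (U (k + l) - U k) ⬝ᵥ (Matrix.diagonal dΩ) *ᵥ (U (k + l) - U k)
        + τ * ∑ k ∈ Finset.range (N - l + 1),
            (restrΓ (U (k + l)) - restrΓ (U k)) ⬝ᵥ
              (Matrix.diagonal dΓ) *ᵥ (restrΓ (U (k + l)) - restrΓ (U k))
      = τ * ∑ k ∈ Finset.range (N - l + 1),
          ((U (k + l) - U k) ⬝ᵥ (Matrix.diagonal dΩ) *ᵥ (U (k + l) - U k)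
            + (restrΓ (U (k + l)) - restrΓ (U k)) ⬝ᵥ
                (Matrix.diagonal dΓ) *ᵥ (restrΓ (U (k + l)) - restrΓ (U k))) := by
        rw [Finset.sum_add_distrib, mul_add]
    _ ≤ τ * ∑ k ∈ Finset.range (N - l + 1),
          max 1 β * (τ * ∑ n ∈ Finset.Icc (k+1) (k+l), g n) :=
        mul_le_mul_of_nonneg_left (Finset.sum_le_sum hkey') hτ.le
    _ = max 1 β * τ * (τ * ∑ k ∈ Finset.range (N - l + 1),
          ∑ n ∈ Finset.Icc (k+1) (k+l), g n) := by
        have hfact : ∀ k ∈ Finset.range (N - l + 1),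
            τ * (max 1 β * (τ * ∑ n ∈ Finset.Icc (k+1) (k+l), g n))
              = (max 1 β * τ * τ) * ∑ n ∈ Finset.Icc (k+1) (k+l), g n := fun k _ => by ring
        rw [Finset.mul_sum, Finset.sum_congr rfl hfact, ← Finset.mul_sum]
        ring
    _ ≤ max 1 β * τ * (τ * ((l:ℝ) * ∑ n ∈ Finset.Icc 1 N, g n)) := by
        apply mul_le_mul_of_nonneg_left _ (mul_nonneg hM0 hτ.le)
        exact mul_le_mul_of_nonneg_left hdouble hτ.le
    _ = max 1 β * (τ * ∑ n ∈ Finset.Icc 1 N, g n) * (τ * (l:ℝ)) := by ring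
    _ ≤ max 1 β * ((1+β⁻¹) * (2*K*T + K/2)) * (τ * (l:ℝ)) := by
        apply mul_le_mul_of_nonneg_right (mul_le_mul_of_nonneg_left hgsum hM0)
        positivity
    _ ≤ (max 1 β * ((1 + β⁻¹) * (2*K*T + K/2)) + 1) * τ * (l:ℝ) := by
        nlinarith [mul_pos hτ hl0]
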